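/- Let ξ be an integrable real random variable with E[ξ] = 0 such that E[min(|ξ|, a)·sign(ξ)] ≤ 0 for every a > 0 (i.e., ξ is heavy on left). Then for every λ ≥ 0, E[exp(λξ - (λ²/2)ξ²)] ≤ 1. -/

import Mathlib

open MeasureTheory

section BercuTouatiAux
open Real Set Filter Topology


noncomputable def Ef (l s : ℝ) : ℝ := Real.exp (-(l*s) - l^2/2 * s^2)

noncomputable def wf (l s : ℝ) : ℝ := ((l + l^2*s)^2 - l^2) * Ef l s

lemma hasDerivAt_Ef (l s : ℝ) : HasDerivAt (Ef l) (-(l + l^2*s) * Ef l s) s := by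
  have h : HasDerivAt (fun s : ℝ => -(l*s) - l^2/2 * s^2) (-(l + l^2*s)) s := by
    have h1 : HasDerivAt (fun s : ℝ => l*s) l s := by
      simpa using (hasDerivAt_id s).const_mul l
    have h2 : HasDerivAt (fun s : ℝ => l^2/2 * s^2) (l^2/2 * (2*s)) s := by
      exact ((hasDerivAt_pow 2 s).const_mul (l^2/2)).congr_deriv (by ring)
    have := h1.neg.sub h2
    refine this.congr_deriv ?_; ring
  exact h.exp.congr_deriv (mul_comm _ _)

lemma hasDerivAt_negE (l s : ℝ) :
    HasDerivAt (fun s => -((l + l^2*s) * Ef l s)) (wf l s) s := by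
  have h1 : HasDerivAt (fun s : ℝ => l + l^2*s) (l^2) s := by
    simpa using ((hasDerivAt_id s).const_mul (l^2)).const_add l
  have := (h1.mul (hasDerivAt_Ef l s)).neg
  refine this.congr_deriv ?_
  unfold wf; ring

lemma hasDerivAt_G (l s : ℝ) :
    HasDerivAt (fun s => -((s*(l + l^2*s) + 1) * Ef l s)) (s * wf l s) s := by
  have h1 : HasDerivAt (fun s : ℝ => s*(l + l^2*s) + 1) (l + 2*l^2*s) s := by
    have ha : HasDerivAt (fun s : ℝ => l + l^2*s) (l^2) s := by
      simpa using ((hasDerivAt_id s).const_mul (l^2)).const_add l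
    have := ((hasDerivAt_id s).mul ha).add_const 1
    refine this.congr_deriv ?_; simp only [id]; ring
  have := (h1.mul (hasDerivAt_Ef l s)).neg
  refine this.congr_deriv ?_
  unfold wf; ring

lemma wf_nonneg {l : ℝ} (hl : 0 ≤ l) {s : ℝ} (hs : 0 ≤ s) : 0 ≤ wf l s := by
  have h : l ≤ l + l^2*s := by nlinarith
  have : l^2 ≤ (l + l^2*s)^2 := by nlinarith
  have := (Real.exp_pos (-(l*s) - l^2/2 * s^2)).le
  unfold wf Ef
  nlinarith [Real.exp_pos (-(l*s) - l^2/2 * s^2)]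

lemma tendsto_negE {l : ℝ} (hl : 0 < l) :
    Tendsto (fun s => -((l + l^2*s) * Ef l s)) atTop (𝓝 0) := by
  have key : Tendsto (fun s => (l + l^2*s) * Ef l s) atTop (𝓝 0) := by
    have hb : Tendsto (fun u : ℝ => l * Real.exp (-u) + l * (u * Real.exp (-u))) atTop (𝓝 0) := by
      have h1 : Tendsto (fun u : ℝ => Real.exp (-u)) atTop (𝓝 0) :=
        Real.tendsto_exp_neg_atTop_nhds_zero
      have h2 : Tendsto (fun u : ℝ => u * Real.exp (-u)) atTop (𝓝 0) := by
        simpa using Real.tendsto_pow_mul_exp_neg_atTop_nhds_zero 1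
      simpa using (h1.const_mul l).add (h2.const_mul l)
    have hcomp : Tendsto (fun s : ℝ => l * Real.exp (-(l*s)) + l * ((l*s) * Real.exp (-(l*s))))
        atTop (𝓝 0) := hb.comp (tendsto_id.const_mul_atTop hl)
    apply squeeze_zero' ?_ ?_ hcomp
    · filter_upwards [eventually_ge_atTop 0] with s hs
      have h1 : (0:ℝ) ≤ l + l^2*s := by nlinarith
      exact mul_nonneg h1 (by unfold Ef; positivity)
    · filter_upwards [eventually_ge_atTop 0] with s hs
      have hE : Ef l s ≤ Real.exp (-(l*s)) := by
        apply Real.exp_le_exp.2; nlinarith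
      have h1 : (0:ℝ) ≤ l + l^2*s := by nlinarith
      have := mul_le_mul_of_nonneg_left hE h1
      calc (l + l^2*s) * Ef l s ≤ (l + l^2*s) * Real.exp (-(l*s)) := this
        _ = l * Real.exp (-(l*s)) + l * ((l*s) * Real.exp (-(l*s))) := by ring
  simpa using key.neg

lemma integrableOn_wf {l : ℝ} (hl : 0 < l) {t : ℝ} (ht : 0 ≤ t) :
    IntegrableOn (wf l) (Ioi t) := by
  apply integrableOn_Ioi_deriv_of_nonneg
    ((hasDerivAt_negE l t).continuousAt.continuousWithinAt)
    (fun x _ => hasDerivAt_negE l x)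
    (fun x hx => wf_nonneg hl.le (ht.trans hx.le))
    (tendsto_negE hl)

lemma integral_wf_Ioi {l : ℝ} (hl : 0 < l) {t : ℝ} (ht : 0 ≤ t) :
    ∫ s in Ioi t, wf l s = (l + l^2*t) * Ef l t := by
  have := integral_Ioi_of_hasDerivAt_of_tendsto'
    (f := fun s => -((l + l^2*s) * Ef l s)) (f' := wf l)
    (fun x _ => hasDerivAt_negE l x) (integrableOn_wf hl ht) (tendsto_negE hl)
  simpa using this

lemma integral_swf_Ioc (l : ℝ) {t : ℝ} (ht : 0 ≤ t) :
    ∫ s in Ioc 0 t, s * wf l s = 1 - (t*(l + l^2*t) + 1) * Ef l t := by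
  have h := intervalIntegral.integral_eq_sub_of_hasDerivAt
    (f := fun s => -((s*(l + l^2*s) + 1) * Ef l s)) (f' := fun s => s * wf l s)
    (a := 0) (b := t) (fun x _ => hasDerivAt_G l x) ?_
  · rw [← intervalIntegral.integral_of_le ht, h]
    simp [Ef]
    ring
  · apply Continuous.intervalIntegrable
    unfold wf Ef
    continuity

lemma integral_min_wf {l : ℝ} (hl : 0 < l) {t : ℝ} (ht : 0 ≤ t) :
    ∫ s in Ioi (0:ℝ), min t s * wf l s = 1 - Ef l t := by
  have hwc : Continuous (wf l) := by unfold wf Ef; continuity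
  have hint1 : IntegrableOn (fun s => min t s * wf l s) (Ioc 0 t) := by
    apply Continuous.integrableOn_Ioc
    exact (continuous_const.min continuous_id).mul hwc
  have hint2 : IntegrableOn (fun s => min t s * wf l s) (Ioi t) := by
    apply IntegrableOn.congr_fun (((integrableOn_wf hl ht).const_mul t : IntegrableOn _ _ _))
      ?_ measurableSet_Ioi
    intro s hs
    simp [min_eq_left (le_of_lt (show t < s from hs))]
  rw [← Ioc_union_Ioi_eq_Ioi ht,
    setIntegral_union (Ioc_disjoint_Ioi le_rfl) measurableSet_Ioi hint1 hint2]
  have e1 : ∫ s in Ioc 0 t, min t s * wf l s = ∫ s in Ioc 0 t, s * wf l s := by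
    apply setIntegral_congr_fun measurableSet_Ioc
    intro s hs
    simp [min_eq_right hs.2]
  have e2 : ∫ s in Ioi t, min t s * wf l s = ∫ s in Ioi t, t * wf l s := by
    apply setIntegral_congr_fun measurableSet_Ioi
    intro s hs
    simp [min_eq_left (le_of_lt (show t < s from hs))]
  rw [e1, e2, integral_swf_Ioc l ht, integral_const_mul, integral_wf_Ioi hl ht]
  ring

lemma pointwise_bound {l : ℝ} (hl : 0 ≤ l) (x : ℝ) :
    Real.exp (l * x - l^2/2 * x^2) ≤ 1 + Real.sign x * (1 - Ef l |x|) := by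
  rcases lt_trichotomy x 0 with hx | rfl | hx
  · have : Ef l |x| = Real.exp (l * x - l^2/2 * x^2) := by
      rw [abs_of_neg hx]; unfold Ef; ring_nf
    rw [Real.sign_of_neg hx, this]
    exact le_of_eq (by ring_nf)
  · simp [Ef, Real.sign_zero]
  · rw [Real.sign_of_pos hx, abs_of_pos hx, one_mul]
    have hc := Real.cosh_le_exp_half_sq (l * x)
    rw [Real.cosh_eq] at hc
    have h1 : Real.exp (l*x - l^2/2*x^2) = Real.exp (l*x) * Real.exp (-((l*x)^2/2)) := by
      rw [← Real.exp_add]; ring_nf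
    have h2 : Ef l x = Real.exp (-(l*x)) * Real.exp (-((l*x)^2/2)) := by
      unfold Ef; rw [← Real.exp_add]; ring_nf
    have h3 : Real.exp ((l*x)^2/2) * Real.exp (-((l*x)^2/2)) = 1 := by
      rw [← Real.exp_add]; simp
    have hp : (0:ℝ) < Real.exp (-((l*x)^2/2)) := Real.exp_pos _
    nlinarith [Real.exp_pos (l*x), Real.exp_pos (-(l*x))]

lemma measurable_realSign : Measurable Real.sign := by
  have : Real.sign = fun r : ℝ => if r < 0 then (-1:ℝ) else if 0 < r then 1 else 0 := rfl
  rw [this]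
  exact Measurable.ite (measurableSet_lt measurable_id measurable_const) measurable_const
    (Measurable.ite (measurableSet_lt measurable_const measurable_id) measurable_const
      measurable_const)

lemma abs_realSign_le_one (x : ℝ) : |Real.sign x| ≤ 1 := by
  rcases Real.sign_apply_eq x with h | h | h <;> simp [h]

end BercuTouatiAux

open Real Set Filter Topology in
theorem integral_exp_le_one_of_heavy_on_left
    {Ω : Type*} {m : MeasurableSpace Ω} {μ : Measure Ω} [IsProbabilityMeasure μ]
    (ξ : Ω → ℝ) (hξ : Measurable ξ) (hint : Integrable ξ μ)
    (hmean : ∫ ω, ξ ω ∂μ = 0)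
    (hheavy : ∀ a > 0, ∫ ω, min |ξ ω| a * Real.sign (ξ ω) ∂μ ≤ 0)
    (l : ℝ) (hl : 0 ≤ l) :
    ∫ ω, Real.exp (l * ξ ω - l ^ 2 / 2 * (ξ ω) ^ 2) ∂μ ≤ 1 := by
  rcases hl.eq_or_lt with h0 | hl
  · simp [← h0]
  have hwc : Continuous (wf l) := by unfold wf Ef; continuity
  have hEc : Continuous (Ef l) := by unfold Ef; continuity
  -- integrability of the exponential
  have hgm : Measurable fun ω => Real.exp (l * ξ ω - l ^ 2 / 2 * (ξ ω) ^ 2) :=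
    ((measurable_const.mul hξ).sub (measurable_const.mul (hξ.pow_const 2))).exp
  have hgint : Integrable (fun ω => Real.exp (l * ξ ω - l ^ 2 / 2 * (ξ ω) ^ 2)) μ := by
    apply Integrable.mono' (integrable_const (Real.exp (1/2 : ℝ))) hgm.aestronglyMeasurable
    filter_upwards with ω
    rw [Real.norm_eq_abs, Real.abs_exp]
    apply Real.exp_le_exp.2
    nlinarith [sq_nonneg (l * ξ ω - 1)]
  -- integrability of the majorant
  have hhm : Measurable fun ω => Real.sign (ξ ω) * (1 - Ef l |ξ ω|) :=
    (measurable_realSign.comp hξ).mul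
      (measurable_const.sub (hEc.measurable.comp hξ.abs))
  have hEle : ∀ t : ℝ, 0 ≤ t → Ef l t ≤ 1 := by
    intro t ht
    rw [show (1:ℝ) = Real.exp 0 by simp]
    apply Real.exp_le_exp.2
    nlinarith
  have hhint : Integrable (fun ω => Real.sign (ξ ω) * (1 - Ef l |ξ ω|)) μ := by
    apply Integrable.mono' (integrable_const (1:ℝ)) hhm.aestronglyMeasurable
    filter_upwards with ω
    rw [Real.norm_eq_abs, abs_mul]
    set t : ℝ := |ξ ω| with htdef
    have h1 : |1 - Ef l t| ≤ 1 := by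
      rw [abs_of_nonneg (by linarith [hEle t (abs_nonneg (ξ ω))])]
      have := Real.exp_pos (-(l*t) - l^2/2 * t^2)
      unfold Ef; linarith [this]
    calc |Real.sign (ξ ω)| * |1 - Ef l t| ≤ 1 * 1 :=
          mul_le_mul (abs_realSign_le_one _) h1 (abs_nonneg _) zero_le_one
      _ = 1 := by ring
  -- the key: expectation of the majorant term is nonpositive
  have key : ∫ ω, Real.sign (ξ ω) * (1 - Ef l |ξ ω|) ∂μ ≤ 0 := by
    have hrep : ∀ ω, Real.sign (ξ ω) * (1 - Ef l |ξ ω|)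
        = ∫ s in Ioi (0:ℝ), (min |ξ ω| s * Real.sign (ξ ω)) * wf l s := by
      intro ω
      rw [show (fun s => (min |ξ ω| s * Real.sign (ξ ω)) * wf l s)
          = (fun s => Real.sign (ξ ω) * (min |ξ ω| s * wf l s)) by funext s; ring,
        integral_const_mul, integral_min_wf hl (abs_nonneg _)]
    simp_rw [hrep]
    -- Fubini
    set ν := volume.restrict (Ioi (0:ℝ)) with hν
    have hFmeas : AEStronglyMeasurable
        (fun p : Ω × ℝ => (min |ξ p.1| p.2 * Real.sign (ξ p.1)) * wf l p.2) (μ.prod ν) := by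
      apply Measurable.aestronglyMeasurable
      exact (((hξ.comp measurable_fst).abs.min measurable_snd).mul
        (measurable_realSign.comp (hξ.comp measurable_fst))).mul
        (hwc.measurable.comp measurable_snd)
    have hdom : Integrable (fun p : Ω × ℝ => |ξ p.1| * wf l p.2) (μ.prod ν) :=
      Integrable.mul_prod hint.abs (integrableOn_wf hl le_rfl)
    have heq : μ.prod ν = (μ.prod volume).restrict (univ ×ˢ Ioi (0:ℝ)) := by
      rw [hν, ← Measure.prod_restrict, Measure.restrict_univ]
    have hae : ∀ᵐ p ∂(μ.prod ν),
        ‖(min |ξ p.1| p.2 * Real.sign (ξ p.1)) * wf l p.2‖ ≤ |ξ p.1| * wf l p.2 := by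
      rw [heq]
      filter_upwards [ae_restrict_mem (MeasurableSet.univ.prod measurableSet_Ioi)] with p hp
      have hs : (0:ℝ) < p.2 := hp.2
      have hw : 0 ≤ wf l p.2 := wf_nonneg hl.le hs.le
      rw [Real.norm_eq_abs, abs_mul, abs_of_nonneg hw]
      apply mul_le_mul_of_nonneg_right ?_ hw
      rw [abs_mul]
      have hmn : |(min |ξ p.1| p.2 : ℝ)| ≤ |ξ p.1| := by
        rw [abs_of_nonneg (le_min (abs_nonneg _) hs.le)]
        exact min_le_left _ _
      calc |(min |ξ p.1| p.2 : ℝ)| * |Real.sign (ξ p.1)| ≤ |ξ p.1| * 1 :=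
            mul_le_mul hmn (abs_realSign_le_one _) (abs_nonneg _) (abs_nonneg _)
        _ = |ξ p.1| := by ring
    have hF : Integrable (fun p : Ω × ℝ => (min |ξ p.1| p.2 * Real.sign (ξ p.1)) * wf l p.2)
        (μ.prod ν) := hdom.mono' hFmeas hae
    rw [integral_integral_swap (f := fun ω s => (min |ξ ω| s * Real.sign (ξ ω)) * wf l s) hF]
    have hinner : ∀ s : ℝ, ∫ ω, (min |ξ ω| s * Real.sign (ξ ω)) * wf l s ∂μ
        = (∫ ω, min |ξ ω| s * Real.sign (ξ ω) ∂μ) * wf l s := fun s => integral_mul_const _ _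
    simp_rw [hinner]
    apply integral_nonpos_of_ae
    rw [hν]
    filter_upwards [ae_restrict_mem measurableSet_Ioi] with s hs
    exact mul_nonpos_of_nonpos_of_nonneg (hheavy s hs) (wf_nonneg hl.le (le_of_lt hs))
  calc ∫ ω, Real.exp (l * ξ ω - l ^ 2 / 2 * (ξ ω) ^ 2) ∂μ
      ≤ ∫ ω, (1 + Real.sign (ξ ω) * (1 - Ef l |ξ ω|)) ∂μ :=
        integral_mono hgint ((integrable_const 1).add hhint)
          (fun ω => pointwise_bound hl.le (ξ ω))
    _ = 1 + ∫ ω, Real.sign (ξ ω) * (1 - Ef l |ξ ω|) ∂μ := by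
        rw [integral_add (integrable_const 1) hhint, integral_const]
        simp
    _ ≤ 1 := by linarith
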